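/- For all i ≥ 5 and j ≥ 3, the 1-defective Ramsey number for bipartite graphs equals 2j−1. In particular: no bipartite graph contains a 1-dense set of size 5, and the complete bipartite graph K_{j−1,j−1} (on 2j−2 vertices) has no 1-sparse set of size j. -/
import Mathlib


open SimpleGraph

/-- A set `S` of vertices is `k`-sparse in `G` if every vertex of `S` has at most `k`
neighbors inside `S`. -/
def KSparse {V : Type*} (G : SimpleGraph V) (k : ℕ) (S : Set V) : Prop :=
  ∀ v ∈ S, ({u ∈ S | G.Adj v u}).ncard ≤ k

/-- A set is `k`-dense in `G` if it is `k`-sparse in the complement of `G`. -/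
def KDense {V : Type*} (G : SimpleGraph V) (k : ℕ) (S : Set V) : Prop :=
  KSparse Gᶜ k S

/-- `G` has a `k`-dense set of size `i`. -/
def HasKDense {V : Type*} (G : SimpleGraph V) (k i : ℕ) : Prop :=
  ∃ D : Set V, D.ncard = i ∧ KDense G k D

/-- `G` has a `k`-sparse set of size `j`. -/
def HasKSparse {V : Type*} (G : SimpleGraph V) (k j : ℕ) : Prop :=
  ∃ S : Set V, S.ncard = j ∧ KSparse G k S

/-- A cactus: every edge lies on at most one cycle, i.e. any two cycles sharing
an edge have the same edge set. -/
def IsCactus {V : Type*} (G : SimpleGraph V) : Prop :=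
  ∀ (u v : V) (c₁ : G.Walk u u) (c₂ : G.Walk v v), c₁.IsCycle → c₂.IsCycle →
    (∃ e, e ∈ c₁.edges ∧ e ∈ c₂.edges) → (∀ e, e ∈ c₁.edges ↔ e ∈ c₂.edges)

/-- A split graph: the vertices partition into a clique and an independent set. -/
def IsSplit {V : Type*} (G : SimpleGraph V) : Prop :=
  ∃ K : Set V, G.IsClique K ∧ Gᶜ.IsClique Kᶜ

/-- A cograph: no induced path on four vertices. -/
def IsCograph {V : Type*} (G : SimpleGraph V) : Prop :=
  ¬ ∃ f : Fin 4 ↪ V, ∀ a b : Fin 4, G.Adj (f a) (f b) ↔ (SimpleGraph.pathGraph 4).Adj a b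

lemma no_dense {V : Type*} {G : SimpleGraph V} (hG : G.Colorable 2) {i : ℕ} (hi : 5 ≤ i) :
    ¬ HasKDense G 1 i := by
  rintro ⟨D, hcard, hdense⟩
  have hfin : D.Finite := by
    by_contra h
    rw [Set.Infinite.ncard h] at hcard
    omega
  obtain ⟨C⟩ := hG
  have hFcard : hfin.toFinset.card = i := by
    rw [← Set.ncard_eq_toFinset_card D hfin, hcard]
  have h4 : (Finset.univ : Finset (Fin 2)).card * 2 < hfin.toFinset.card := by
    simp [hFcard]; omega
  obtain ⟨b, -, hb⟩ := Finset.exists_lt_card_fiber_of_mul_lt_card_of_maps_to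
    (f := C) (fun a _ => Finset.mem_univ (C a)) h4
  rw [Finset.two_lt_card_iff] at hb
  obtain ⟨u, v, w, hu, hv, hw, huv, huw, hvw⟩ := hb
  simp only [Finset.mem_filter, Set.Finite.mem_toFinset] at hu hv hw
  have key : {v, w} ⊆ {x ∈ D | Gᶜ.Adj u x} := by
    intro x hx
    rcases hx with rfl | rfl
    · exact ⟨hv.1, ⟨huv, fun h => C.valid h (hu.2.trans hv.2.symm)⟩⟩
    · exact ⟨hw.1, ⟨huw, fun h => C.valid h (hu.2.trans hw.2.symm)⟩⟩
  have h3 : ({v, w} : Set V).ncard ≤ ({x ∈ D | Gᶜ.Adj u x}).ncard :=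
    Set.ncard_le_ncard key (hfin.subset (fun x hx => hx.1))
  rw [Set.ncard_pair hvw] at h3
  have h2 := hdense u hu.1
  omega

lemma has_sparse {j : ℕ} (hj : 3 ≤ j) (G : SimpleGraph (Fin (2 * j - 1)))
    (hG : G.Colorable 2) : HasKSparse G 1 j := by
  obtain ⟨C⟩ := hG
  have hcard : (Finset.univ : Finset (Fin 2)).card * (j - 1)
      < (Finset.univ : Finset (Fin (2 * j - 1))).card := by
    simp; omega
  obtain ⟨b, -, hb⟩ := Finset.exists_lt_card_fiber_of_mul_lt_card_of_maps_to
    (f := C) (fun a _ => Finset.mem_univ (C a)) hcard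
  obtain ⟨t, hts, htcard⟩ := Finset.exists_subset_card_eq (s := Finset.univ.filter fun x => C x = b) (n := j) (by omega)
  refine ⟨↑t, by rw [Set.ncard_coe_finset, htcard], ?_⟩
  intro v hv
  have he : {u ∈ (↑t : Set _) | G.Adj v u} = ∅ := by
    ext u
    simp only [Set.mem_setOf_eq, Set.mem_empty_iff_false, iff_false, not_and, Finset.mem_coe]
    rintro hu hadj
    have h1 : C v = b := (Finset.mem_filter.mp (hts hv)).2
    have h2 : C u = b := (Finset.mem_filter.mp (hts hu)).2
    exact C.valid hadj (h1.trans h2.symm)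
  rw [he]
  simp

lemma sparse_of_iso {V W : Type*} {G : SimpleGraph V} {H : SimpleGraph W}
    (e : G ≃g H) {k j : ℕ} (h : HasKSparse G k j) : HasKSparse H k j := by
  obtain ⟨S, hc, hsp⟩ := h
  refine ⟨e '' S, by rw [Set.ncard_image_of_injective _ e.injective, hc], ?_⟩
  rintro v' ⟨v, hv, rfl⟩
  have he : {u ∈ (⇑e '' S) | H.Adj (e v) u} = ⇑e '' {u ∈ S | G.Adj v u} := by
    ext u'
    constructor
    · rintro ⟨⟨u, hu, rfl⟩, hadj⟩
      exact ⟨u, ⟨hu, e.map_adj_iff.mp hadj⟩, rfl⟩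
    · rintro ⟨u, ⟨hu, hadj⟩, rfl⟩
      exact ⟨⟨u, hu, rfl⟩, e.map_adj_iff.mpr hadj⟩
  rw [he, Set.ncard_image_of_injective _ e.injective]
  exact hsp v hv

lemma cb_no_sparse {j : ℕ} (hj : 3 ≤ j) :
    ¬ HasKSparse (completeBipartiteGraph (Fin (j - 1)) (Fin (j - 1))) 1 j := by
  rintro ⟨S, hcard, hsp⟩
  set A := {u ∈ S | u.isLeft = true} with hA
  have hBA : {u ∈ S | u.isRight = true} = S \ A := by
    ext u; cases u <;> simp [hA]
  have hsum : (S \ A).ncard + A.ncard = S.ncard :=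
    Set.ncard_diff_add_ncard_of_subset (fun u hu => hu.1) (Set.toFinite S)
  have hrangeL : (Set.range (Sum.inl : Fin (j-1) → Fin (j-1) ⊕ Fin (j-1))).ncard = j - 1 := by
    rw [← Set.image_univ, Set.ncard_image_of_injective _ Sum.inl_injective, Set.ncard_univ,
      Nat.card_eq_fintype_card, Fintype.card_fin]
  have hrangeR : (Set.range (Sum.inr : Fin (j-1) → Fin (j-1) ⊕ Fin (j-1))).ncard = j - 1 := by
    rw [← Set.image_univ, Set.ncard_image_of_injective _ Sum.inr_injective, Set.ncard_univ,
      Nat.card_eq_fintype_card, Fintype.card_fin]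
  have hA9 : A.ncard ≤ j - 1 := by
    refine le_trans (le_of_le_of_eq ?_ hrangeL) le_rfl
    refine Set.ncard_le_ncard ?_ (Set.toFinite _)
    rintro ⟨x⟩ hu
    · exact ⟨x, rfl⟩
    · simp [hA] at hu
  have hB9 : (S \ A).ncard ≤ j - 1 := by
    refine le_trans (le_of_le_of_eq ?_ hrangeR) le_rfl
    refine Set.ncard_le_ncard ?_ (Set.toFinite _)
    rintro u hu
    rcases u with x | x
    · exact absurd ⟨hu.1, rfl⟩ hu.2
    · exact ⟨x, rfl⟩
  have hAne : A.Nonempty := by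
    rw [Set.nonempty_iff_ne_empty]
    intro h
    have h0 : A.ncard = 0 := by rw [h]; exact Set.ncard_empty _
    omega
  have hBne : (S \ A).Nonempty := by
    rw [Set.nonempty_iff_ne_empty]
    intro h
    have h0 : (S \ A).ncard = 0 := by rw [h]; exact Set.ncard_empty _
    omega
  obtain ⟨a, haS, haL⟩ := hAne
  obtain ⟨b, hbS⟩ := hBne
  have hbR : b.isRight = true := by
    have := (hBA ▸ hbS :)
    exact this.2
  have hBle : (S \ A).ncard ≤ 1 := by
    have h1 := hsp a haS
    have heq : {u ∈ S | (completeBipartiteGraph (Fin (j-1)) (Fin (j-1))).Adj a u} = S \ A := by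
      rw [← hBA]
      ext u
      obtain ⟨x, rfl⟩ := Sum.isLeft_iff.mp haL
      cases u <;> simp
    rwa [heq] at h1
  have hAle : A.ncard ≤ 1 := by
    have h1 := hsp b hbS.1
    have heq : {u ∈ S | (completeBipartiteGraph (Fin (j-1)) (Fin (j-1))).Adj b u} = A := by
      ext u
      obtain ⟨x, rfl⟩ := Sum.isRight_iff.mp hbR
      cases u <;> simp [hA]
    rwa [heq] at h1
  omega

theorem stmt13 (i j : ℕ) (hi : 5 ≤ i) (hj : 3 ≤ j) :
    (∀ G : SimpleGraph (Fin (2 * j - 1)), G.Colorable 2 →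
        HasKDense G 1 i ∨ HasKSparse G 1 j) ∧
    (∃ G : SimpleGraph (Fin (2 * j - 2)),
        G.Colorable 2 ∧ ¬ HasKDense G 1 i ∧ ¬ HasKSparse G 1 j) ∧
    (∀ (n : ℕ) (G : SimpleGraph (Fin n)), G.Colorable 2 → ¬ HasKDense G 1 5) ∧
    ¬ HasKSparse (completeBipartiteGraph (Fin (j - 1)) (Fin (j - 1))) 1 j := by
  have e : Fin (2 * j - 2) ≃ (Fin (j - 1) ⊕ Fin (j - 1)) :=
    (finCongr (by omega : 2 * j - 2 = (j - 1) + (j - 1))).trans finSumFinEquiv.symm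
  set K := completeBipartiteGraph (Fin (j - 1)) (Fin (j - 1)) with hK
  have hKcol : (K.comap e).Colorable 2 := by
    refine ⟨SimpleGraph.Coloring.mk (fun u => if (e u).isLeft then 0 else 1) ?_⟩
    intro v w hadj
    change K.Adj (e v) (e w) at hadj
    rcases hev : e v with x | x <;> rcases hew : e w with y | y <;>
      rw [hev, hew] at hadj <;> simp_all [hK, completeBipartiteGraph]
  refine ⟨fun G hG => Or.inr (has_sparse hj G hG),
    ⟨K.comap e, hKcol, no_dense hKcol hi,
      fun h => cb_no_sparse hj (sparse_of_iso ⟨e, Iff.rfl⟩ h)⟩,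
    fun n G hG => no_dense hG le_rfl, cb_no_sparse hj⟩
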